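/- For any positive integers C, D, n with C·2^{D+1} ≤ log₂ n, there exists a simultaneous multicast instance on an n-node graph with congestion C and dilation D whose every schedule has length at least C·D/2. -/

import Mathlib

/-- The graph induced by a label `χ`: edges carrying `χ` in their label set. -/
def labelGraph {V L : Type*} (lab : V → V → Finset L) (χ : L) : SimpleGraph V where
  Adj u v := u ≠ v ∧ (χ ∈ lab u v ∨ χ ∈ lab v u)
  symm := ⟨fun u v h => ⟨h.1.symm, h.2.symm⟩⟩
  loopless := ⟨fun v h => h.1 rfl⟩

/-- The vertices of the multicast tree of label `χ`: its root together with all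
vertices incident to an edge carrying `χ`. -/
def labelSupp {V L : Type*} (lab : V → V → Finset L) (root : L → V) (χ : L) : Set V :=
  {v | v = root χ ∨ ∃ u, (labelGraph lab χ).Adj v u}

/-- A store-and-forward schedule for a simultaneous multicast instance: in each
synchronous round at most one packet crosses each edge, packet `m_χ` (initially known
only to `root χ`) may only traverse edges of its tree (edges whose label set contains
`χ`), and nodes may copy packets. `knows t χ` is the set of vertices knowing `m_χ`
after `t` rounds, and `send t u v` is the packet sent from `u` to `v` in round `t+1`. -/
structure Schedule (V L : Type*) (lab : V → V → Finset L) (root : L → V) where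
  knows : ℕ → L → Set V
  send : ℕ → V → V → Option L
  init : ∀ χ, knows 0 χ = {root χ}
  send_mem : ∀ t u v χ, send t u v = some χ → χ ∈ lab u v ∧ u ∈ knows t χ
  one_per_edge : ∀ t u v, (send t u v).isSome → send t v u = none
  step : ∀ t χ, knows (t+1) χ = knows t χ ∪ {v | ∃ u, send t u v = some χ}

/-- A schedule has length at most `T` (solves the instance within `T` rounds) if
after `T` rounds every vertex of every multicast tree — in particular every leaf —
knows the corresponding packet. -/
def Schedule.Solves {V L : Type*} {lab : V → V → Finset L} {root : L → V}
    (S : Schedule V L lab root) (T : ℕ) : Prop :=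
  ∀ χ v, v ∈ labelSupp lab root χ → v ∈ S.knows T χ


open SimpleGraph

section ParentSystem

variable {α : Type*} {G : SimpleGraph α} {r : α} {N : Set α} {par : α → α} {dep : α → ℕ}

def PS (G : SimpleGraph α) (r : α) (N : Set α) (par : α → α) (dep : α → ℕ) : Prop :=
  (∀ u v, G.Adj u v ↔ u ≠ v ∧ ((u = par v ∧ v ∈ N) ∨ (v = par u ∧ u ∈ N))) ∧
  r ∈ N ∧ par r = r ∧ dep r = 0 ∧
  (∀ v ∈ N, v ≠ r → par v ∈ N ∧ dep v = dep (par v) + 1)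

variable (hps : PS G r N par dep)
include hps

lemma ps_adj_mem {u v : α} (h : G.Adj u v) : u ∈ N ∧ v ∈ N := by
  obtain ⟨hadj, hr, hparr, hdep0, hpar⟩ := id hps
  rcases (hadj u v).1 h with ⟨hne, ⟨hu, hv⟩ | ⟨hv, hu⟩⟩
  · by_cases hvr : v = r
    · subst hvr; rw [hparr] at hu; exact absurd hu hne
    · exact ⟨hu ▸ (hpar v hv hvr).1, hv⟩
  · by_cases hur : u = r
    · subst hur; rw [hparr] at hv; exact absurd hv.symm hne
    · exact ⟨hu, hv ▸ (hpar u hu hur).1⟩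

lemma ps_parent_adj {v : α} (hv : v ∈ N) (hvr : v ≠ r) : G.Adj (par v) v := by
  obtain ⟨hadj, hr, hparr, hdep0, hpar⟩ := id hps
  refine (hadj _ _).2 ⟨?_, Or.inl ⟨rfl, hv⟩⟩
  intro h
  have := (hpar v hv hvr).2
  rw [h] at this; omega

lemma ps_walk_to_root : ∀ n (v : α), v ∈ N → dep v ≤ n →
    ∃ p : G.Walk v r, p.length = dep v ∧ p.IsPath ∧ ∀ x ∈ p.support, x ∈ N ∧ dep x ≤ dep v := by
  obtain ⟨hadj, hr, hparr, hdep0, hpar⟩ := id hps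
  intro n
  induction n with
  | zero =>
    intro v hv hd
    have hvr : v = r := by
      by_contra hvr
      have := (hpar v hv hvr).2; omega
    subst hvr
    exact ⟨Walk.nil, by simp [hdep0], by simp, by simp [hr]⟩
  | succ n ih =>
    intro v hv hd
    by_cases hvr : v = r
    · subst hvr
      exact ⟨Walk.nil, by simp [hdep0], by simp, by simp [hr]⟩
    · obtain ⟨hpN, hdv⟩ := hpar v hv hvr
      obtain ⟨p, hl, hp, hsup⟩ := ih (par v) hpN (by omega)
      refine ⟨Walk.cons ((ps_parent_adj hps hv hvr).symm) p, ?_, ?_, ?_⟩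
      · simp [hl]; omega
      · refine hp.cons ?_
        intro hmem
        have := (hsup v hmem).2; omega
      · intro x hx
        rw [Walk.support_cons] at hx
        rcases List.mem_cons.mp hx with hx | hx
        · subst hx; exact ⟨hv, le_rfl⟩
        · have := hsup x hx; exact ⟨this.1, by omega⟩

lemma ps_visits_parent : ∀ n (u : α) (w : G.Walk u r), w.length ≤ n → u ≠ r →
    par u ∈ w.support := by
  classical
  obtain ⟨hadj, hr, hparr, hdep0, hpar⟩ := id hps
  intro n
  induction n with
  | zero =>
    intro u w hw hu
    cases w with
    | nil => exact absurd rfl hu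
    | cons h p => simp [Walk.length_cons] at hw
  | succ n ih =>
    intro u w hw hu
    cases w with
    | nil => exact absurd rfl hu
    | @cons _ x _ h p =>
      rw [Walk.length_cons] at hw
      have hpn : p.length ≤ n := by omega
      rcases (hadj u x).1 h with ⟨hne, ⟨hux, hxN⟩ | ⟨hxu, _⟩⟩
      · -- u = par x : went down to child x
        have hxr : x ≠ r := by
          intro hxr; subst hxr; rw [hparr] at hux; exact hne hux
        have h1 : par x ∈ p.support := ih x p hpn hxr
        rw [← hux] at h1
        have h2 : par u ∈ (p.dropUntil u h1).support :=
          ih u (p.dropUntil u h1) (le_trans (Walk.length_dropUntil_le p h1) hpn) hu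
        have h3 := Walk.support_dropUntil_subset p h1 h2
        rw [Walk.support_cons]
        exact List.mem_cons.mpr (Or.inr h3)
      · rw [← hxu]
        rw [Walk.support_cons]
        exact List.mem_cons.mpr (Or.inr (Walk.start_mem_support p))

lemma ps_path_length : ∀ n (u : α) (w : G.Walk u r), w.length ≤ n → w.IsPath →
    w.length = dep u := by
  intro n
  induction n with
  | zero =>
    intro u w hw _
    obtain ⟨hadj, hr, hparr, hdep0, hpar⟩ := id hps
    cases w with
    | nil => simp [hdep0]
    | cons h p => simp [Walk.length_cons] at hw
  | succ n ih =>
    intro u w hw hp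
    obtain ⟨hadj, hr, hparr, hdep0, hpar⟩ := id hps
    cases w with
    | nil => simp [hdep0]
    | @cons _ x _ h p =>
      rw [Walk.length_cons] at hw ⊢
      have hpn : p.length ≤ n := by omega
      have hur : u ≠ r := by
        intro hur; subst hur
        have hnd := hp.support_nodup
        rw [Walk.support_cons] at hnd
        exact (List.nodup_cons.mp hnd).1 (Walk.end_mem_support p)
      rcases (hadj u x).1 h with ⟨hne, ⟨hux, hxN⟩ | ⟨hxu, huN⟩⟩
      · -- went down to child x; p must revisit u : contradiction
        have hxr : x ≠ r := by
          intro hxr; subst hxr; rw [hparr] at hux; exact hne hux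
        have h1 : par x ∈ p.support := ps_visits_parent hps p.length x p le_rfl hxr
        rw [← hux] at h1
        have hnd := hp.support_nodup
        rw [Walk.support_cons] at hnd
        exact absurd h1 (List.nodup_cons.mp hnd).1
      · have := ih x p hpn hp.of_cons
        rw [this, hxu]
        exact ((hpar u huN hur).2).symm

end ParentSystem

section ParentSystem2
variable {α : Type*} {G : SimpleGraph α} {r : α} {N : Set α} {par : α → α} {dep : α → ℕ}

variable (hps : PS G r N par dep)
include hps

lemma ps_acyclic : G.IsAcyclic := by
  classical
  intro v c hc
  obtain ⟨hadj, hr, hparr, hdep0, hpar⟩ := id hps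
  -- pick a vertex of maximal depth on the cycle
  obtain ⟨m, hm, hmax⟩ := Finset.exists_max_image c.support.toFinset dep
    ⟨v, by simp [Walk.start_mem_support]⟩
  rw [List.mem_toFinset] at hm
  have hmax' : ∀ x ∈ c.support, dep x ≤ dep m := fun x hx =>
    hmax x (List.mem_toFinset.mpr hx)
  set c' := c.rotate m hm with hc'def
  have hc' : c'.IsCycle := hc.rotate hm
  have hsup : ∀ x ∈ c'.support, dep x ≤ dep m := by
    intro x hx
    rw [Walk.support_eq_cons] at hx
    rcases List.mem_cons.mp hx with hx | hx
    · subst hx; exact le_rfl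
    · have := (Walk.support_rotate c m hm).mem_iff.mp hx
      exact hmax' x (by rw [Walk.support_eq_cons]; exact List.mem_cons.mpr (Or.inr this))
  clear_value c'
  cases c' with
  | nil => exact hc'.ne_nil rfl
  | @cons _ a _ h p =>
    rw [Walk.cons_isCycle_iff] at hc'
    obtain ⟨hp, he⟩ := hc'
    -- the successor a of m on the cycle is its parent
    have hstep : ∀ b : α, G.Adj m b → b ∈ p.support → b = par m := by
      intro b hb hbs
      rcases (hadj m b).1 hb with ⟨hne, ⟨hmb, hbN⟩ | ⟨hbm, hmN⟩⟩
      · -- m = par b, b child of m: depth too big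
        have hbr : b ≠ r := by
          intro hbr; subst hbr; rw [hparr] at hmb; exact hne hmb
        have := (hpar b hbN hbr).2
        have hble : dep b ≤ dep m := by
          apply hsup
          rw [Walk.support_cons]
          exact List.mem_cons.mpr (Or.inr hbs)
        rw [← hmb] at this; omega
      · exact hbm
    have ha : a = par m := hstep a h (Walk.start_mem_support p)
    -- look at the reverse: last vertex before m is also par m
    have hrev := p.reverse
    cases hq : p.reverse with
    | nil => exact h.ne rfl
    | @cons _ b _ h' q =>
      have hb : b = par m := by
        apply hstep b h'
        have : b ∈ p.reverse.support := by
          rw [hq, Walk.support_cons]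
          exact List.mem_cons.mpr (Or.inr (Walk.start_mem_support q))
        rw [Walk.support_reverse, List.mem_reverse] at this
        exact this
      -- edge s(m,b) is in p.edges
      have hmem : s(m, b) ∈ p.edges := by
        have : s(m, b) ∈ p.reverse.edges := by
          rw [hq, Walk.edges_cons]; exact List.mem_cons.mpr (Or.inl rfl)
        rw [Walk.edges_reverse, List.mem_reverse] at this
        exact this
      rw [hb, ← ha] at hmem
      exact he hmem

lemma ps_connected (huniv : ∀ v, v ∈ N) : G.Connected := by
  obtain ⟨hadj, hr, hparr, hdep0, hpar⟩ := id hps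
  have hreach : ∀ v : α, G.Reachable v r := by
    intro v
    obtain ⟨p, -, -, -⟩ := ps_walk_to_root hps (dep v) v (huniv v) le_rfl
    exact ⟨p⟩
  haveI : Nonempty α := ⟨r⟩
  exact Connected.mk (fun u v => (hreach u).trans (hreach v).symm)

end ParentSystem2
section SchedLemmas

variable {V L : Type*} {lab : V → V → Finset L} {root : L → V}

lemma Schedule.knows_mono (Sc : Schedule V L lab root) {t t' : ℕ} (h : t ≤ t') (χ : L) :
    Sc.knows t χ ⊆ Sc.knows t' χ := by
  induction t' with
  | zero => cases Nat.le_zero.mp h; exact subset_rfl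
  | succ n ih =>
    rcases Nat.lt_or_ge t (n+1) with h' | h'
    · have := ih (by omega)
      rw [Sc.step n χ]
      exact this.trans Set.subset_union_left
    · have : t = n + 1 := by omega
      subst this; exact subset_rfl

/-- Cut lemma: if the only `χ`-transmission into the region `W` is over the
directed edge `(u, z)`, then any knowledge of `χ` inside `W` at time `t` was
preceded by a send over `(u, z)`. -/
lemma Schedule.cut (Sc : Schedule V L lab root) {χ : L} {W : Set V} {u z : V}
    (hroot : root χ ∉ W)
    (hcross : ∀ t x y, Sc.send t x y = some χ → x ∉ W → y ∈ W → x = u ∧ y = z) :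
    ∀ t v, v ∈ W → v ∈ Sc.knows t χ →
      ∃ t' < t, Sc.send t' u z = some χ ∧ u ∈ Sc.knows t' χ := by
  intro t
  induction t with
  | zero =>
    intro v hv hk
    rw [Sc.init χ] at hk
    exact absurd (hk ▸ hv) hroot
  | succ n ih =>
    intro v hv hk
    rw [Sc.step n χ] at hk
    rcases hk with hk | hk
    · obtain ⟨t', ht', h1, h2⟩ := ih v hv hk
      exact ⟨t', by omega, h1, h2⟩
    · obtain ⟨x, hx⟩ := hk
      by_cases hxW : x ∈ W
      · have hxk : x ∈ Sc.knows n χ := (Sc.send_mem n x v χ hx).2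
        obtain ⟨t', ht', h1, h2⟩ := ih x hxW hxk
        exact ⟨t', by omega, h1, h2⟩
      · obtain ⟨rfl, rfl⟩ := hcross n x v hx hxW hv
        exact ⟨n, by omega, hx, (Sc.send_mem n x v χ hx).2⟩

end SchedLemmas

def List.enum {α : Type*} (l : List α) : List (ℕ × α) := l.zipIdx.map Prod.swap

theorem List.enum_map_snd {α : Type*} (l : List α) : l.enum.map Prod.snd = l := by
  unfold List.enum; rw [List.map_map]; exact List.zipIdx_map_fst 0 l

theorem List.mem_enum {α : Type*} {x : α} {i : ℕ} {xs : List α} (h : (i, x) ∈ xs.enum) :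
    ∃ hi : i < xs.length, x = xs[i] := by
  simp only [List.enum, List.mem_map] at h
  obtain ⟨⟨a, j⟩, hm, he⟩ := h
  simp only [Prod.swap, Prod.mk.injEq] at he
  obtain ⟨rfl, rfl⟩ := he
  exact ⟨(List.mem_zipIdx' hm).1, (List.mem_zipIdx' hm).2⟩

section Pick

variable {L : Type*} [LinearOrder L]

/-- Choose up to `Cc` elements of `U` according to a bitmask over positions in the
sorted enumeration of `U`. -/
def pick (Cc : ℕ) (m : ℕ → Bool) (U : Finset L) : Finset L :=
  ((((U.sort (·≤·)).enum.filter (fun p => m p.1)).map Prod.snd).take Cc).toFinset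

lemma pick_subset (Cc : ℕ) (m : ℕ → Bool) (U : Finset L) : pick Cc m U ⊆ U := by
  intro x hx
  rw [pick, List.mem_toFinset] at hx
  have h1 := List.take_subset _ _ hx
  have h2 := List.map_subset Prod.snd ((List.filter_sublist (l := (U.sort (·≤·)).enum) (p := fun p => m p.1)).subset) h1
  rw [List.enum_map_snd] at h2
  exact (Finset.mem_sort _).mp h2

lemma pick_card_le (Cc : ℕ) (m : ℕ → Bool) (U : Finset L) : (pick Cc m U).card ≤ Cc := by
  rw [pick]
  exact le_trans (List.toFinset_card_le _) (List.length_take_le ..)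

lemma pick_surj {Cc : ℕ} {σ U : Finset L} (hsub : σ ⊆ U) (hcard : σ.card ≤ Cc) :
    ∃ m : ℕ → Bool, (∀ i, m i = true → i < U.card) ∧ pick Cc m U = σ := by
  classical
  set l := U.sort (·≤·) with hl
  refine ⟨fun i => if h : i < l.length then decide (l.get ⟨i, h⟩ ∈ σ) else false, ?_, ?_⟩
  · intro i hi
    have hi' : (if h : i < l.length then decide (l.get ⟨i, h⟩ ∈ σ) else false) = true := hi
    rw [← Finset.length_sort (α := L) (· ≤ ·) (s := U), ← hl]
    by_contra hge
    rw [dif_neg hge] at hi'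
    exact Bool.false_ne_true hi'
  · rw [pick]
    have hfc : l.enum.filter (fun p => if h : p.1 < l.length then decide (l.get ⟨p.1, h⟩ ∈ σ) else false)
        = l.enum.filter (fun p => decide (p.2 ∈ σ)) := by
      apply List.filter_congr
      intro p hp
      obtain ⟨hlt, hx⟩ := List.mem_enum (x := p.2) (i := p.1) (by simpa using hp)
      rw [dif_pos hlt]
      congr 1
      simp [hx, List.get_eq_getElem]
    rw [hfc]
    have hmap : (l.enum.filter (fun p => decide (p.2 ∈ σ))).map Prod.snd
        = l.filter (fun x => decide (x ∈ σ)) := by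
      have := List.filter_map (p := fun x => decide (x ∈ σ)) (f := Prod.snd) (l := l.enum)
      rw [List.enum_map_snd] at this
      rw [this]
      rfl
    rw [hmap]
    have hnd : (l.filter (fun x => decide (x ∈ σ))).Nodup :=
      (List.filter_sublist (l := l)).nodup (Finset.sort_nodup _ _)
    have htf : (l.filter (fun x => decide (x ∈ σ))).toFinset = σ := by
      ext x
      rw [List.mem_toFinset, List.mem_filter]
      constructor
      · rintro ⟨-, h2⟩; simpa using h2
      · intro hx
        exact ⟨(Finset.mem_sort _).mpr (hsub hx), by simpa using hx⟩
    have hlen := List.toFinset_card_of_nodup hnd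
    rw [htf] at hlen
    rw [List.take_of_length_le (by rw [← hlen]; exact hcard)]
    exact htf

end Pick
namespace MC

/-- Outcome descriptors of a level-`ℓ` bundle. -/
def Out (C : ℕ) : ℕ → Type
  | 0 => PUnit
  | (ℓ+1) => Out C ℓ × Out C ℓ × (Fin (2*C) → Bool)

instance outDecEq (C : ℕ) : ∀ ℓ, DecidableEq (Out C ℓ)
  | 0 => (inferInstance : DecidableEq PUnit)
  | (ℓ+1) => @instDecidableEqProd _ _ (outDecEq C ℓ)
      (@instDecidableEqProd _ _ (outDecEq C ℓ) inferInstance)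

instance outFintype (C : ℕ) : ∀ ℓ, Fintype (Out C ℓ)
  | 0 => (inferInstance : Fintype PUnit)
  | (ℓ+1) => @instFintypeProd _ _ (outFintype C ℓ)
      (@instFintypeProd _ _ (outFintype C ℓ) inferInstance)

instance outInhabited (C : ℕ) : ∀ ℓ, Inhabited (Out C ℓ)
  | 0 => (inferInstance : Inhabited PUnit)
  | (ℓ+1) => @instInhabitedProd _ _ (outInhabited C ℓ)
      (@instInhabitedProd _ _ (outInhabited C ℓ) inferInstance)

/-- Labels: a base bundle index and a packet index. -/
def Lab (C D : ℕ) := Fin (2^D) × Fin C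

instance : DecidableEq (Lab C D) := instDecidableEqProd

instance labFintype (C D : ℕ) : Fintype (Lab C D) := instFintypeProd _ _

noncomputable instance labLinearOrder (C D : ℕ) : LinearOrder (Lab C D) :=
  LinearOrder.lift' (fun χ => (χ.1 : ℕ) * C + (χ.2 : ℕ)) (by
    intro a b h
    simp only at h
    have ha := a.2.isLt
    have hb := b.2.isLt
    have h1 : (a.1 : ℕ) = (b.1 : ℕ) := by
      rcases Nat.lt_trichotomy (a.1 : ℕ) (b.1 : ℕ) with hlt | heq | hgt
      · have h2 := Nat.mul_le_mul_right C (Nat.succ_le_of_lt hlt)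
        rw [Nat.succ_mul] at h2; omega
      · exact heq
      · have h2 := Nat.mul_le_mul_right C (Nat.succ_le_of_lt hgt)
        rw [Nat.succ_mul] at h2; omega
    have h3 : (a.1 : ℕ) * C = (b.1 : ℕ) * C := by rw [h1]
    have h2 : (a.2 : ℕ) = (b.2 : ℕ) := by omega
    obtain ⟨a1, a2⟩ := a; obtain ⟨b1, b2⟩ := b
    exact Prod.ext (Fin.ext h1) (Fin.ext h2))

end MC
namespace MC

variable {C D : ℕ}

/-- The label set of an outcome of bundle `(ℓ, b)`. -/
noncomputable def Sb (C D : ℕ) : (ℓ : ℕ) → ℕ → Out C ℓ → Finset (Lab C D)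
  | 0, b, _ => Finset.univ.filter (fun χ => (χ.1 : ℕ) = b)
  | (ℓ+1), b, ω => pick C (fun i => if h : i < 2*C then ω.2.2 ⟨i, h⟩ else false)
      (Sb C D ℓ (2*b) ω.1 ∪ Sb C D ℓ (2*b+1) ω.2.1)

lemma Sb_zero (b : ℕ) (ω : Out C 0) :
    Sb C D 0 b ω = Finset.univ.filter (fun χ => (χ.1 : ℕ) = b) := rfl

lemma Sb_succ (ℓ b : ℕ) (ω : Out C (ℓ+1)) :
    Sb C D (ℓ+1) b ω = pick C (fun i => if h : i < 2*C then ω.2.2 ⟨i, h⟩ else false)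
      (Sb C D ℓ (2*b) ω.1 ∪ Sb C D ℓ (2*b+1) ω.2.1) := rfl

/-- Merge vertices. -/
def Vz (C D : ℕ) := Σ ℓ : Fin D, Fin (2^(D-1-ℓ.val)) × Out C ℓ.val × Out C ℓ.val

instance : Fintype (Vz C D) :=
  inferInstanceAs (Fintype (Σ ℓ : Fin D, Fin (2^(D-1-ℓ.val)) × Out C ℓ.val × Out C ℓ.val))

instance : DecidableEq (Vz C D) :=
  inferInstanceAs (DecidableEq (Σ ℓ : Fin D, Fin (2^(D-1-ℓ.val)) × Out C ℓ.val × Out C ℓ.val))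

/-- Vertices: roots plus merge vertices. -/
def Vert (C D : ℕ) := Fin (2^D) ⊕ Vz C D

instance : Fintype (Vert C D) := inferInstanceAs (Fintype (Fin (2^D) ⊕ Vz C D))
instance : DecidableEq (Vert C D) := inferInstanceAs (DecidableEq (Fin (2^D) ⊕ Vz C D))

/-- The port (output vertex) of an outcome of bundle `(ℓ, b)`. -/
def port (C D : ℕ) : (ℓ : ℕ) → ℕ → Out C ℓ → Vert C D
  | 0, b, _ => Sum.inl ⟨b % 2^D, Nat.mod_lt _ (Nat.pow_pos (n := D) two_pos)⟩
  | (ℓ+1), b, ω =>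
    if h : ℓ < D ∧ b < 2^(D-1-ℓ) then Sum.inr ⟨⟨ℓ, h.1⟩, ⟨b, h.2⟩, ω.1, ω.2.1⟩
    else Sum.inl ⟨0, Nat.pow_pos (n := D) two_pos⟩

/-- Membership of a vertex in the tree of label `χ`. -/
def InT (χ : Lab C D) : Vert C D → Prop
  | Sum.inl β => β = χ.1
  | Sum.inr ⟨ℓ, b, ωA, ωB⟩ =>
      χ ∈ Sb C D ℓ.val (2*b.val) ωA ∪ Sb C D ℓ.val (2*b.val+1) ωB

/-- The root of the tree of `χ`. -/
def rt (C D : ℕ) (χ : Lab C D) : Vert C D := Sum.inl χ.1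

/-- Parent map of the tree of `χ`. -/
noncomputable def parv (χ : Lab C D) : Vert C D → Vert C D
  | Sum.inl β => Sum.inl β
  | Sum.inr ⟨ℓ, b, ωA, ωB⟩ =>
      if χ ∈ Sb C D ℓ.val (2*b.val) ωA then port C D ℓ.val (2*b.val) ωA
      else port C D ℓ.val (2*b.val+1) ωB

/-- Depth of a vertex. -/
def depv : Vert C D → ℕ
  | Sum.inl _ => 0
  | Sum.inr ⟨ℓ, _, _, _⟩ => ℓ.val + 1

open Classical in
/-- The labelling of edges. -/
noncomputable def lab (C D : ℕ) (u v : Vert C D) : Finset (Lab C D) :=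
  Finset.univ.filter (fun χ =>
    (InT χ v ∧ v ≠ rt C D χ ∧ u = parv χ v) ∨ (InT χ u ∧ u ≠ rt C D χ ∧ v = parv χ u))

lemma lab_symm (u v : Vert C D) : lab C D u v = lab C D v u := by
  unfold lab
  congr 1
  funext χ
  exact propext (or_comm)

lemma mem_lab {u v : Vert C D} {χ : Lab C D} :
    χ ∈ lab C D u v ↔
    (InT χ v ∧ v ≠ rt C D χ ∧ u = parv χ v) ∨ (InT χ u ∧ u ≠ rt C D χ ∧ v = parv χ u) := by
  classical
  unfold lab
  simp only [Finset.mem_filter, Finset.mem_univ, true_and]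

/-- Basic range fact about `Sb`. -/
lemma Sb_range : ∀ (ℓ b : ℕ) (ω : Out C ℓ) (χ : Lab C D), χ ∈ Sb C D ℓ b ω →
    (χ.1 : ℕ) / 2^ℓ = b := by
  intro ℓ
  induction ℓ with
  | zero =>
    intro b ω χ hχ
    rw [Sb_zero, Finset.mem_filter] at hχ
    simpa using hχ.2
  | succ ℓ ih =>
    intro b ω χ hχ
    rw [Sb_succ] at hχ
    have := pick_subset _ _ _ hχ
    rw [Finset.mem_union] at this
    have key : (χ.1 : ℕ) / 2^ℓ = 2*b ∨ (χ.1 : ℕ) / 2^ℓ = 2*b+1 := by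
      rcases this with h | h
      · exact Or.inl (ih _ _ _ h)
      · exact Or.inr (ih _ _ _ h)
    have h2 : (χ.1 : ℕ) / 2^(ℓ+1) = ((χ.1 : ℕ) / 2^ℓ) / 2 := by
      rw [pow_succ, Nat.div_div_eq_div_mul]
    rw [h2]
    rcases key with h | h <;> rw [h] <;> omega

lemma Sb_card_le (ℓ b : ℕ) (ω : Out C ℓ) : (Sb C D ℓ b ω).card ≤ C := by
  cases ℓ with
  | zero =>
    rw [Sb_zero]
    have h : (Finset.univ.filter (fun χ : Lab C D => (χ.1 : ℕ) = b)).card ≤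
        (Finset.univ : Finset (Fin C)).card := by
      apply Finset.card_le_card_of_injOn (fun χ => χ.2)
      · intro χ _; exact Finset.mem_univ _
      · intro χ1 h1 χ2 h2 h
        rw [Finset.mem_coe, Finset.mem_filter] at h1 h2
        have : (χ1.1 : ℕ) = χ2.1 := by rw [h1.2, h2.2]
        exact Prod.ext (Fin.ext this) h
    simpa using h
  | succ ℓ =>
    rw [Sb_succ]
    exact pick_card_le _ _ _

lemma Sb_base_card (b : ℕ) (hb : b < 2^D) (ω : Out C 0) : (Sb C D 0 b ω).card = C := by
  refine le_antisymm (Sb_card_le 0 b ω) ?_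
  have h : (Finset.univ : Finset (Fin C)).card ≤ (Sb C D 0 b ω).card := by
    apply Finset.card_le_card_of_injOn (fun i => ((⟨b, hb⟩, i) : Lab C D))
    · intro i _
      refine Finset.mem_coe.mpr (Finset.mem_filter.mpr ?_)
      exact ⟨Finset.mem_univ _, rfl⟩
    · intro i _ j _ hij
      exact congrArg Prod.snd hij
  simpa using h

lemma Sb_succ_subset (ℓ b : ℕ) (ω : Out C (ℓ+1)) :
    Sb C D (ℓ+1) b ω ⊆ Sb C D ℓ (2*b) ω.1 ∪ Sb C D ℓ (2*b+1) ω.2.1 := by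
  rw [Sb_succ]
  exact pick_subset _ _ _

lemma Sb_disj (ℓ b : ℕ) (ωA ωB : Out C ℓ) (χ : Lab C D)
    (hA : χ ∈ Sb C D ℓ (2*b) ωA) (hB : χ ∈ Sb C D ℓ (2*b+1) ωB) : False := by
  have h1 := Sb_range ℓ (2*b) ωA χ hA
  have h2 := Sb_range ℓ (2*b+1) ωB χ hB
  omega

end MC
namespace MC

variable {C D : ℕ}

lemma pow_split {ℓ : ℕ} (hℓ : ℓ < D) : 2^(D-1-ℓ) * 2 = 2^(D-ℓ) := by
  rw [← pow_succ]
  congr 1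
  omega

lemma InT_inl {χ : Lab C D} {β : Fin (2^D)} : InT χ (Sum.inl β) ↔ β = χ.1 := Iff.rfl

lemma InT_inr {χ : Lab C D} {ℓ : Fin D} {b : Fin (2^(D-1-ℓ.val))} {ωA ωB : Out C ℓ.val} :
    InT χ (Sum.inr ⟨ℓ, b, ωA, ωB⟩ : Vert C D) ↔
    χ ∈ Sb C D ℓ.val (2*b.val) ωA ∪ Sb C D ℓ.val (2*b.val+1) ωB := Iff.rfl

lemma parv_inl {χ : Lab C D} {β : Fin (2^D)} : parv χ (Sum.inl β : Vert C D) = Sum.inl β := rfl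

lemma parv_inr {χ : Lab C D} {ℓ : Fin D} {b : Fin (2^(D-1-ℓ.val))} {ωA ωB : Out C ℓ.val} :
    parv χ (Sum.inr ⟨ℓ, b, ωA, ωB⟩ : Vert C D) =
      if χ ∈ Sb C D ℓ.val (2*b.val) ωA then port C D ℓ.val (2*b.val) ωA
      else port C D ℓ.val (2*b.val+1) ωB := rfl

lemma depv_inl {β : Fin (2^D)} : depv (Sum.inl β : Vert C D) = 0 := rfl

lemma depv_inr {ℓ : Fin D} {b : Fin (2^(D-1-ℓ.val))} {ωA ωB : Out C ℓ.val} :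
    depv (Sum.inr ⟨ℓ, b, ωA, ωB⟩ : Vert C D) = ℓ.val + 1 := rfl

lemma port_zero {b : ℕ} (hb : b < 2^D) (ω : Out C 0) :
    port C D 0 b ω = Sum.inl ⟨b, hb⟩ := by
  have h : port C D 0 b ω
      = Sum.inl ⟨b % 2^D, Nat.mod_lt _ (Nat.pow_pos (n := D) two_pos)⟩ := rfl
  rw [h]
  exact congrArg Sum.inl (Fin.ext (Nat.mod_eq_of_lt hb))

lemma port_succ {ℓ b : ℕ} (hℓ : ℓ < D) (hb : b < 2^(D-1-ℓ)) (ω : Out C (ℓ+1)) :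
    port C D (ℓ+1) b ω = Sum.inr ⟨⟨ℓ, hℓ⟩, ⟨b, hb⟩, ω.1, ω.2.1⟩ := by
  have h : port C D (ℓ+1) b ω = (if h : ℓ < D ∧ b < 2^(D-1-ℓ) then
      (Sum.inr ⟨⟨ℓ, h.1⟩, ⟨b, h.2⟩, ω.1, ω.2.1⟩ : Vert C D)
      else Sum.inl ⟨0, Nat.pow_pos (n := D) two_pos⟩) := rfl
  rw [h, dif_pos ⟨hℓ, hb⟩]

lemma depv_port {ℓ b : ℕ} (hℓ : ℓ ≤ D) (hb : b < 2^(D-ℓ)) (ω : Out C ℓ) :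
    depv (port C D ℓ b ω) = ℓ := by
  cases ℓ with
  | zero =>
    rw [port_zero (by simpa using hb), depv_inl]
  | succ ℓ =>
    have hℓ' : ℓ < D := by omega
    have he : D - (ℓ+1) = D-1-ℓ := by omega
    rw [he] at hb
    rw [port_succ hℓ' hb, depv_inr]

lemma InT_port {ℓ b : ℕ} (hℓ : ℓ ≤ D) (hb : b < 2^(D-ℓ)) {ω : Out C ℓ} {χ : Lab C D}
    (hχ : χ ∈ Sb C D ℓ b ω) : InT χ (port C D ℓ b ω) := by
  cases ℓ with
  | zero =>
    have hb' : b < 2^D := by simpa using hb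
    rw [port_zero hb']
    rw [InT_inl]
    have := Sb_range 0 b ω χ hχ
    rw [pow_zero, Nat.div_one] at this
    exact Fin.ext this.symm
  | succ ℓ =>
    have hℓ' : ℓ < D := by omega
    have he : D - (ℓ+1) = D-1-ℓ := by omega
    rw [he] at hb
    rw [port_succ hℓ' hb]
    rw [InT_inr]
    exact Sb_succ_subset ℓ b ω hχ

lemma port_ne {ℓ b b' : ℕ} (hℓ : ℓ ≤ D) (hb : b < 2^(D-ℓ)) (hb' : b' < 2^(D-ℓ))
    (hne : b ≠ b') (ω ω' : Out C ℓ) : port C D ℓ b ω ≠ port C D ℓ b' ω' := by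
  cases ℓ with
  | zero =>
    rw [port_zero (by simpa using hb), port_zero (by simpa using hb')]
    intro h
    replace h := Fin.mk.inj_iff.mp (Sum.inl.inj h)
    exact hne h
  | succ ℓ =>
    have hℓ' : ℓ < D := by omega
    have he : D - (ℓ+1) = D-1-ℓ := by omega
    rw [he] at hb hb'
    rw [port_succ hℓ' hb, port_succ hℓ' hb']
    intro h
    replace h := Sum.inr.inj h
    injection h with h1 h2
    exact hne (congrArg (fun p => (p.1.val : ℕ)) h2)

lemma rt_InT (χ : Lab C D) : InT χ (rt C D χ) := by
  rw [rt, InT_inl]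

lemma parv_rt (χ : Lab C D) : parv χ (rt C D χ) = rt C D χ := rfl

lemma depv_rt (χ : Lab C D) : depv (rt C D χ) = 0 := rfl

lemma depv_le_D (v : Vert C D) : depv v ≤ D := by
  rcases v with β | ⟨ℓ, b, ωA, ωB⟩
  · rw [depv_inl]; omega
  · rw [depv_inr]; exact ℓ.isLt

lemma side_bounds {ℓ : Fin D} (b : Fin (2^(D-1-ℓ.val))) :
    2*b.val < 2^(D-ℓ.val) ∧ 2*b.val+1 < 2^(D-ℓ.val) := by
  have := pow_split (D := D) ℓ.isLt
  have := b.isLt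
  omega

/-- For vertices in the tree, the parent is in the tree with depth one less. -/
lemma parv_step {χ : Lab C D} {v : Vert C D} (hv : InT χ v) (hvr : v ≠ rt C D χ) :
    InT χ (parv χ v) ∧ depv v = depv (parv χ v) + 1 := by
  rcases v with β | ⟨ℓ, b, ωA, ωB⟩
  · rw [InT_inl] at hv
    exact absurd (by rw [rt, hv]) hvr
  · rw [InT_inr, Finset.mem_union] at hv
    obtain ⟨hbA, hbB⟩ := side_bounds (ℓ := ℓ) b
    have hle : ℓ.val ≤ D := le_of_lt ℓ.isLt
    rcases hv with hA | hB
    · rw [parv_inr, if_pos hA]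
      exact ⟨InT_port hle hbA hA, by rw [depv_inr, depv_port hle hbA]⟩
    · have hnA : χ ∉ Sb C D ℓ.val (2*b.val) ωA := fun hA => Sb_disj _ _ _ _ _ hA hB
      rw [parv_inr, if_neg hnA]
      exact ⟨InT_port hle hbB hB, by rw [depv_inr, depv_port hle hbB]⟩

/-- The parent system structure for each label's graph. -/
lemma ps_main (χ : Lab C D) :
    PS (labelGraph (lab C D) χ) (rt C D χ) {v | InT χ v} (parv χ) depv := by
  refine ⟨?_, rt_InT χ, parv_rt χ, depv_rt χ, ?_⟩
  · intro u v
    constructor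
    · rintro ⟨hne, hm | hm⟩ <;> rw [mem_lab] at hm <;>
        rcases hm with ⟨h1, h2, h3⟩ | ⟨h1, h2, h3⟩
      · exact ⟨hne, Or.inl ⟨h3, h1⟩⟩
      · exact ⟨hne, Or.inr ⟨h3, h1⟩⟩
      · exact ⟨hne.symm ∘ Eq.symm, Or.inr ⟨h3, h1⟩⟩
      · exact ⟨hne.symm ∘ Eq.symm, Or.inl ⟨h3, h1⟩⟩
    · rintro ⟨hne, ⟨h1, h2⟩ | ⟨h1, h2⟩⟩
      · refine ⟨hne, Or.inl ?_⟩
        rw [mem_lab]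
        refine Or.inl ⟨h2, ?_, h1⟩
        intro hrt
        rw [hrt, parv_rt] at h1
        exact hne (h1.trans hrt.symm)
      · refine ⟨hne, Or.inl ?_⟩
        rw [mem_lab]
        refine Or.inr ⟨h2, ?_, h1⟩
        intro hrt
        rw [hrt, parv_rt] at h1
        exact hne ((h1.trans hrt.symm).symm)
  · intro v hv hvr
    have := parv_step hv hvr
    exact ⟨this.1, this.2⟩

lemma supp_eq (χ : Lab C D) : labelSupp (lab C D) (rt C D) χ = {v | InT χ v} := by
  ext v
  constructor
  · rintro (rfl | ⟨u, hadj⟩)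
    · exact rt_InT χ
    · exact (ps_adj_mem (ps_main χ) hadj).1
  · intro hv
    by_cases hvr : v = rt C D χ
    · exact Or.inl hvr
    · exact Or.inr ⟨parv χ v, (ps_parent_adj (ps_main χ) hv hvr).symm⟩

end MC
namespace MC

variable {C D : ℕ}

open Classical in
noncomputable def dirF (C D : ℕ) (u v : Vert C D) : Finset (Lab C D) :=
  Finset.univ.filter (fun χ => InT χ v ∧ v ≠ rt C D χ ∧ u = parv χ v)

lemma mem_dirF {u v : Vert C D} {χ : Lab C D} :
    χ ∈ dirF C D u v ↔ InT χ v ∧ v ≠ rt C D χ ∧ u = parv χ v := by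
  classical
  unfold dirF
  simp only [Finset.mem_filter, Finset.mem_univ, true_and]

lemma lab_eq_union (u v : Vert C D) : lab C D u v = dirF C D u v ∪ dirF C D v u := by
  classical
  unfold lab dirF
  rw [← Finset.filter_or]

lemma dirF_card_le (u v : Vert C D) : (dirF C D u v).card ≤ C := by
  rcases v with β | ⟨ℓ, b, ωA, ωB⟩
  · have : dirF C D u (Sum.inl β) = ∅ := by
      rw [Finset.eq_empty_iff_forall_notMem]
      intro χ hχ
      replace hχ := mem_dirF.mp hχ
      obtain ⟨h1, h2, h3⟩ := hχ
      rw [InT_inl] at h1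
      exact h2 (by rw [rt, h1])
    rw [this]; simp
  · obtain ⟨hbA, hbB⟩ := side_bounds (ℓ := ℓ) b
    have hle : ℓ.val ≤ D := le_of_lt ℓ.isLt
    by_cases hu : u = port C D ℓ.val (2*b.val) ωA
    · have hsub : dirF C D u (Sum.inr ⟨ℓ, b, ωA, ωB⟩) ⊆ Sb C D ℓ.val (2*b.val) ωA := by
        intro χ hχ
        replace hχ := mem_dirF.mp hχ
        obtain ⟨h1, -, h3⟩ := hχ
        rw [InT_inr, Finset.mem_union] at h1
        rcases h1 with h1 | h1
        · exact h1
        · exfalso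
          have hnA : χ ∉ Sb C D ℓ.val (2*b.val) ωA := fun hA => Sb_disj _ _ _ _ _ hA h1
          rw [parv_inr, if_neg hnA] at h3
          exact port_ne hle hbA hbB (by omega) ωA ωB (hu ▸ h3)
      exact le_trans (Finset.card_le_card hsub) (Sb_card_le _ _ _)
    · have hsub : dirF C D u (Sum.inr ⟨ℓ, b, ωA, ωB⟩) ⊆ Sb C D ℓ.val (2*b.val+1) ωB := by
        intro χ hχ
        replace hχ := mem_dirF.mp hχ
        obtain ⟨h1, -, h3⟩ := hχ
        rw [InT_inr, Finset.mem_union] at h1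
        rcases h1 with h1 | h1
        · exfalso
          rw [parv_inr, if_pos h1] at h3
          exact hu h3
        · exact h1
      exact le_trans (Finset.card_le_card hsub) (Sb_card_le _ _ _)

lemma lab_card_le (u v : Vert C D) : (lab C D u v).card ≤ C := by
  rw [lab_eq_union]
  rcases Finset.eq_empty_or_nonempty (dirF C D u v) with h | h
  · rw [h, Finset.empty_union]
    exact dirF_card_le v u
  · have h2 : dirF C D v u = ∅ := by
      obtain ⟨χ1, hχ1⟩ := h
      rw [mem_dirF] at hχ1
      have hd1 : depv v = depv u + 1 := by
        have := (parv_step hχ1.1 hχ1.2.1).2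
        rw [← hχ1.2.2] at this
        exact this
      rw [Finset.eq_empty_iff_forall_notMem]
      intro χ2 hχ2
      rw [mem_dirF] at hχ2
      have hd2 : depv u = depv v + 1 := by
        have := (parv_step hχ2.1 hχ2.2.1).2
        rw [← hχ2.2.2] at this
        exact this
      omega
    rw [h2, Finset.union_empty]
    exact dirF_card_le u v

lemma lab_witness (hD : 0 < D) :
    ∃ u v : Vert C D, (lab C D u v).card = C := by
  have h2D : (0:ℕ) < 2^D := Nat.pow_pos (n := D) two_pos
  have h2D' : (0:ℕ) < 2^(D-1-(0:ℕ)) := Nat.pow_pos two_pos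
  set ℓ0 : Fin D := ⟨0, hD⟩
  set b0 : Fin (2^(D-1-ℓ0.val)) := ⟨0, h2D'⟩
  set z0 : Vert C D := Sum.inr ⟨ℓ0, b0, default, default⟩
  set u0 : Vert C D := port C D 0 (2*b0.val) default
  refine ⟨u0, z0, le_antisymm (lab_card_le _ _) ?_⟩
  have hsub : Sb C D 0 (2*b0.val) default ⊆ lab C D u0 z0 := by
    intro χ hχ
    rw [mem_lab]
    refine Or.inl ⟨?_, ?_, ?_⟩
    · rw [InT_inr, Finset.mem_union]
      exact Or.inl hχ
    · intro h
      rw [rt] at h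
      exact Sum.inr_ne_inl h
    · rw [parv_inr, if_pos hχ]
  calc C = (Sb C D 0 (2*b0.val) default).card := (Sb_base_card _ (by show 2 * 0 < 2^D; omega) _).symm
    _ ≤ (lab C D u0 z0).card := Finset.card_le_card hsub

lemma supp_mem_iff {χ : Lab C D} {v : Vert C D} :
    v ∈ labelSupp (lab C D) (rt C D) χ ↔ InT χ v := by
  rw [supp_eq]
  exact Iff.rfl

/-- The parent system on the induced subgraph on the support. -/
lemma ps_induced (χ : Lab C D) :
    PS ((labelGraph (lab C D) χ).induce (labelSupp (lab C D) (rt C D) χ))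
      (⟨rt C D χ, Or.inl rfl⟩ : labelSupp (lab C D) (rt C D) χ)
      Set.univ
      (fun v => ⟨parv χ v.val, by
        rw [supp_mem_iff]
        by_cases h : v.val = rt C D χ
        · rw [h, parv_rt]; exact rt_InT χ
        · exact (parv_step (supp_mem_iff.mp v.2) h).1⟩)
      (fun v => depv v.val) := by
  constructor
  · intro u v
    rw [SimpleGraph.comap_adj]
    rw [(ps_main χ).1]
    constructor
    · rintro ⟨hne, ⟨h1, h2⟩ | ⟨h1, h2⟩⟩
      · exact ⟨fun h => hne (congrArg Subtype.val h),
          Or.inl ⟨Subtype.ext h1, Set.mem_univ _⟩⟩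
      · exact ⟨fun h => hne (congrArg Subtype.val h),
          Or.inr ⟨Subtype.ext h1, Set.mem_univ _⟩⟩
    · rintro ⟨hne, ⟨h1, -⟩ | ⟨h1, -⟩⟩
      · exact ⟨fun h => hne (Subtype.ext h), Or.inl ⟨congrArg Subtype.val h1, supp_mem_iff.mp v.2⟩⟩
      · exact ⟨fun h => hne (Subtype.ext h), Or.inr ⟨congrArg Subtype.val h1, supp_mem_iff.mp u.2⟩⟩
  · refine ⟨Set.mem_univ _, ?_, ?_, ?_⟩
    · exact Subtype.ext (parv_rt χ)
    · exact depv_rt χ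
    · intro v _ hvr
      have hval : v.val ≠ rt C D χ := fun h => hvr (Subtype.ext h)
      have hInT : InT χ v.val := supp_mem_iff.mp v.2
      exact ⟨Set.mem_univ _, (parv_step hInT hval).2⟩

lemma isTree (χ : Lab C D) :
    ((labelGraph (lab C D) χ).induce (labelSupp (lab C D) (rt C D) χ)).IsTree :=
  ⟨ps_connected (ps_induced χ) (fun _ => Set.mem_univ _), ps_acyclic (ps_induced χ)⟩

lemma dilation_le (χ : Lab C D) (v : Vert C D)
    (p : (labelGraph (lab C D) χ).Walk (rt C D χ) v) (hp : p.IsPath) : p.length ≤ D := by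
  have := ps_path_length (ps_main χ) p.reverse.length v p.reverse le_rfl hp.reverse
  rw [SimpleGraph.Walk.length_reverse] at this
  rw [this]
  exact depv_le_D v

lemma mask_exists {σ U : Finset (Lab C D)} (hsub : σ ⊆ U) (hc : σ.card ≤ C) (hU : U.card ≤ 2*C) :
    ∃ mask : Fin (2*C) → Bool,
      pick C (fun i => if h : i < 2*C then mask ⟨i, h⟩ else false) U = σ := by
  obtain ⟨m, hm1, hm2⟩ := pick_surj hsub hc
  refine ⟨fun i => m i.val, ?_⟩
  have : (fun i => if h : i < 2*C then m (⟨i, h⟩ : Fin (2*C)).val else false) = m := by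
    funext i
    by_cases h : i < 2*C
    · rw [dif_pos h]
    · rw [dif_neg h]
      cases hmi : m i with
      | false => rfl
      | true => exact absurd (lt_of_lt_of_le (hm1 i hmi) hU) h
  rw [this]
  exact hm2

lemma Sb_surj (ℓ b : ℕ) (ωA ωB : Out C ℓ) (σ : Finset (Lab C D))
    (hsub : σ ⊆ Sb C D ℓ (2*b) ωA ∪ Sb C D ℓ (2*b+1) ωB) (hc : σ.card ≤ C) :
    ∃ ω : Out C (ℓ+1), ω.1 = ωA ∧ ω.2.1 = ωB ∧ Sb C D (ℓ+1) b ω = σ := by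
  have hU : (Sb C D ℓ (2*b) ωA ∪ Sb C D ℓ (2*b+1) ωB).card ≤ 2*C := by
    calc (Sb C D ℓ (2*b) ωA ∪ Sb C D ℓ (2*b+1) ωB).card
        ≤ (Sb C D ℓ (2*b) ωA).card + (Sb C D ℓ (2*b+1) ωB).card := Finset.card_union_le _ _
      _ ≤ 2*C := by
          have := Sb_card_le (C := C) (D := D) ℓ (2*b) ωA
          have := Sb_card_le (C := C) (D := D) ℓ (2*b+1) ωB
          omega
  obtain ⟨mask, hmask⟩ := mask_exists hsub hc hU
  exact ⟨(ωA, ωB, mask), rfl, rfl, by exact hmask⟩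

lemma exists_deep (hC : 0 < C) : ∀ ℓ : ℕ, ∃ ω : Out C ℓ,
    ((⟨0, Nat.pow_pos (n := D) two_pos⟩, ⟨0, hC⟩) : Lab C D) ∈ Sb C D ℓ 0 ω := by
  intro ℓ
  induction ℓ with
  | zero =>
    refine ⟨PUnit.unit, ?_⟩
    refine Finset.mem_filter.mpr ?_
    exact ⟨Finset.mem_univ _, rfl⟩
  | succ ℓ ih =>
    obtain ⟨ω, hω⟩ := ih
    set χ0 : Lab C D := (⟨0, Nat.pow_pos (n := D) two_pos⟩, ⟨0, hC⟩)
    have h0 : χ0 ∈ Sb C D ℓ (2*0) ω := by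
      have : 2*0 = 0 := rfl
      rw [this]
      exact hω
    obtain ⟨ω', h1, h2, h3⟩ := Sb_surj ℓ 0 ω default {χ0}
      (by intro x hx
          rw [Finset.mem_singleton] at hx
          subst hx
          exact Finset.mem_union_left _ h0)
      (by rw [Finset.card_singleton]; omega)
    exact ⟨ω', by rw [h3]; exact Finset.mem_singleton_self _⟩

lemma dilation_witness (hC : 0 < C) :
    ∃ (χ : Lab C D) (v : Vert C D) (p : (labelGraph (lab C D) χ).Walk (rt C D χ) v),
      p.IsPath ∧ p.length = D := by
  obtain ⟨ω, hω⟩ := exists_deep (D := D) hC D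
  set χ0 : Lab C D := (⟨0, Nat.pow_pos (n := D) two_pos⟩, ⟨0, hC⟩)
  have hb : (0:ℕ) < 2^(D-D) := Nat.pow_pos two_pos
  set v : Vert C D := port C D D 0 ω
  have hInT : InT χ0 v := InT_port le_rfl hb hω
  have hdep : depv v = D := depv_port le_rfl hb ω
  obtain ⟨p, hl, hp, -⟩ := ps_walk_to_root (ps_main χ0) (depv v) v hInT le_rfl
  refine ⟨χ0, v, p.reverse, hp.reverse, ?_⟩
  rw [SimpleGraph.Walk.length_reverse, hl, hdep]

end MC
namespace MC

open Classical

variable {C D : ℕ}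

lemma depv_zero_rt {χ : Lab C D} {v : Vert C D} (hv : InT χ v) (hd : depv v = 0) :
    v = rt C D χ := by
  rcases v with β | ⟨ℓ, b, ωA, ωB⟩
  · rw [InT_inl] at hv
    rw [rt, hv]
  · rw [depv_inr] at hd
    omega

section LowerBound

variable (Sc : Schedule (Vert C D) (Lab C D) (lab C D) (rt C D))

/-- First time a vertex knows a packet. -/
noncomputable def arr (χ : Lab C D) (v : Vert C D) : ℕ :=
  if h : ∃ t, v ∈ Sc.knows t χ then Nat.find h else 0

variable {T : ℕ} (hsolve : Sc.Solves T)
include hsolve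

lemma arr_exists {χ : Lab C D} {v : Vert C D} (hv : InT χ v) : ∃ t, v ∈ Sc.knows t χ :=
  ⟨T, hsolve χ v (supp_mem_iff.mpr hv)⟩

lemma arr_spec {χ : Lab C D} {v : Vert C D} (hv : InT χ v) :
    v ∈ Sc.knows (arr Sc χ v) χ := by
  rw [arr, dif_pos (arr_exists Sc hsolve hv)]
  exact Nat.find_spec (arr_exists Sc hsolve hv)

lemma arr_min {χ : Lab C D} {v : Vert C D} (hv : InT χ v) {t : ℕ} (ht : t < arr Sc χ v) :
    v ∉ Sc.knows t χ := by
  rw [arr, dif_pos (arr_exists Sc hsolve hv)] at ht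
  exact Nat.find_min (arr_exists Sc hsolve hv) ht

lemma arr_le {χ : Lab C D} {v : Vert C D} (hv : InT χ v) : arr Sc χ v ≤ T := by
  rw [arr, dif_pos (arr_exists Sc hsolve hv)]
  exact Nat.find_le (hsolve χ v (supp_mem_iff.mpr hv))

/-- The key delivery lemma: packet `χ` first reaches `z` via the edge from its parent. -/
lemma delivery {χ : Lab C D} {z : Vert C D} (hz : InT χ z) (hzr : z ≠ rt C D χ) :
    1 ≤ arr Sc χ z ∧
    Sc.send (arr Sc χ z - 1) (parv χ z) z = some χ ∧
    parv χ z ∈ Sc.knows (arr Sc χ z - 1) χ := by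
  set a := arr Sc χ z with ha
  have ha1 : 1 ≤ a := by
    rcases Nat.eq_zero_or_pos a with h0 | h1
    · exfalso
      have := arr_spec Sc hsolve hz
      rw [← ha, h0, Sc.init] at this
      exact hzr this
    · exact h1
  -- region below z
  set W : Set (Vert C D) := {v | InT χ v ∧ depv z ≤ depv v ∧ (parv χ)^[depv v - depv z] v = z}
    with hW
  have hdz : 1 ≤ depv z := by
    rcases Nat.eq_zero_or_pos (depv z) with h0 | h1
    · exact absurd (depv_zero_rt hz h0) hzr
    · exact h1
  have hroot : rt C D χ ∉ W := by
    intro h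
    rw [hW] at h
    have := h.2.1
    rw [depv_rt] at this
    omega
  have hmemW : ∀ v, v ∈ W → InT χ v := fun v hv => hv.1
  -- any vertex in W other than z has its parent in W
  have hparW : ∀ y, y ∈ W → y ≠ z → parv χ y ∈ W ∧ y ≠ rt C D χ := by
    intro y hy hyz
    obtain ⟨h1, h2, h3⟩ := hy
    have hdy : depv z < depv y := by
      rcases Nat.lt_or_ge (depv z) (depv y) with h | h
      · exact h
      · exfalso
        have : depv y = depv z := by omega
        rw [this, Nat.sub_self, Function.iterate_zero_apply] at h3
        exact hyz h3
    have hyr : y ≠ rt C D χ := by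
      intro h
      rw [h, depv_rt] at hdy
      omega
    obtain ⟨hp1, hp2⟩ := parv_step h1 hyr
    refine ⟨⟨hp1, by omega, ?_⟩, hyr⟩
    have hk : depv y - depv z = (depv (parv χ y) - depv z) + 1 := by omega
    rw [hk, Function.iterate_succ_apply] at h3
    exact h3
  -- a child of a vertex in W is in W
  have hchildW : ∀ x, InT χ x → x ≠ rt C D χ → parv χ x ∈ W → x ∈ W := by
    intro x hx hxr hpx
    obtain ⟨h1, h2, h3⟩ := hpx
    obtain ⟨hp1, hp2⟩ := parv_step hx hxr
    refine ⟨hx, by omega, ?_⟩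
    have hk : depv x - depv z = (depv (parv χ x) - depv z) + 1 := by omega
    rw [hk, Function.iterate_succ_apply]
    exact h3
  have hcross : ∀ t x y, Sc.send t x y = some χ → x ∉ W → y ∈ W →
      x = parv χ z ∧ y = z := by
    intro t x y hsend hxW hyW
    have hlab := (Sc.send_mem t x y χ hsend).1
    rw [mem_lab] at hlab
    rcases hlab with ⟨h1, h2, h3⟩ | ⟨h1, h2, h3⟩
    · -- x = parv χ y
      by_cases hyz : y = z
      · subst hyz
        exact ⟨h3, rfl⟩
      · exfalso
        obtain ⟨hpW, -⟩ := hparW y hyW hyz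
        rw [← h3] at hpW
        exact hxW hpW
    · -- y = parv χ x
      exfalso
      exact hxW (hchildW x h1 h2 (h3 ▸ hyW))
  have hzW : z ∈ W := ⟨hz, le_rfl, by rw [Nat.sub_self, Function.iterate_zero_apply]⟩
  obtain ⟨t', ht', hs1, hs2⟩ := Sc.cut hroot hcross a z hzW (arr_spec Sc hsolve hz)
  have hk : z ∈ Sc.knows (t'+1) χ := by
    rw [Sc.step]
    exact Or.inr ⟨parv χ z, hs1⟩
  have hle : a ≤ t' + 1 := by
    by_contra hlt
    exact arr_min Sc hsolve hz (by omega : t' + 1 < a) hk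
  have : t' = a - 1 := by omega
  subst this
  exact ⟨ha1, hs1, hs2⟩

/-- The main inductive invariant: at every level `ℓ` and bundle `b` there is an
outcome all whose `C` labels reach its port only after time `ℓ * (C/2 + 1)`. -/
lemma invariant (hC : 0 < C) : ∀ ℓ, ℓ ≤ D → ∀ b, b < 2^(D-ℓ) →
    ∃ ω : Out C ℓ, (Sb C D ℓ b ω).card = C ∧
      ∀ χ ∈ Sb C D ℓ b ω, ∀ t, t < ℓ * (C/2 + 1) →
        port C D ℓ b ω ∉ Sc.knows t χ := by
  intro ℓ
  induction ℓ with
  | zero =>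
    intro _ b hb
    exact ⟨PUnit.unit, Sb_base_card b (by simpa using hb) _, fun χ _ t ht => by omega⟩
  | succ ℓ ih =>
    intro hℓ1 b hb
    have hℓD : ℓ < D := by omega
    have hsplit : 2^(D-(ℓ+1)) * 2 = 2^(D-ℓ) := by
      rw [← pow_succ]; congr 1; omega
    have hbA : 2*b < 2^(D-ℓ) := by omega
    have hbB : 2*b+1 < 2^(D-ℓ) := by omega
    have hb' : b < 2^(D-1-ℓ) := by
      have : D-(ℓ+1) = D-1-ℓ := by omega
      rw [← this]; exact hb
    obtain ⟨ωA, hcA, hlA⟩ := ih (by omega) (2*b) hbA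
    obtain ⟨ωB, hcB, hlB⟩ := ih (by omega) (2*b+1) hbB
    set τ := ℓ * (C/2 + 1) with hτ
    set z : Vert C D := Sum.inr ⟨⟨ℓ, hℓD⟩, ⟨b, hb'⟩, ωA, ωB⟩ with hzdef
    set U := Sb C D ℓ (2*b) ωA ∪ Sb C D ℓ (2*b+1) ωB with hU
    have hUz : ∀ χ ∈ U, InT χ z := by
      intro χ hχ
      rw [hzdef, InT_inr]
      exact hχ
    have hzrt : ∀ χ : Lab C D, z ≠ rt C D χ := by
      intro χ h
      rw [hzdef, rt] at h
      exact Sum.inr_ne_inl h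
    -- arrivals of side-A packets
    have hparA : ∀ χ ∈ Sb C D ℓ (2*b) ωA, parv χ z = port C D ℓ (2*b) ωA := by
      intro χ hχ
      rw [hzdef, parv_inr, if_pos hχ]
    have hparB : ∀ χ ∈ Sb C D ℓ (2*b+1) ωB, parv χ z = port C D ℓ (2*b+1) ωB := by
      intro χ hχ
      rw [hzdef, parv_inr, if_neg (fun hA => Sb_disj _ _ _ _ _ hA hχ)]
    -- every packet arrives after τ
    have harr_side : ∀ (S0 : Finset (Lab C D)) (p0 : Vert C D),
        (∀ χ ∈ S0, parv χ z = p0) →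
        (∀ χ ∈ S0, ∀ t, t < τ → p0 ∉ Sc.knows t χ) →
        (∀ χ ∈ S0, χ ∈ U) →
        (S0.filter (fun χ => arr Sc χ z ≤ τ + C/2)).card ≤ C/2 := by
      intro S0 p0 hpar hlate hsub
      have hinj : ∀ χ ∈ S0.filter (fun χ => arr Sc χ z ≤ τ + C/2),
          arr Sc χ z ∈ Finset.Icc (τ+1) (τ + C/2) := by
        intro χ hχ
        rw [Finset.mem_filter] at hχ
        obtain ⟨hχS, hχa⟩ := hχ
        obtain ⟨h1, h2, h3⟩ := delivery Sc hsolve (hUz χ (hsub χ hχS)) (hzrt χ)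
        rw [hpar χ hχS] at h3
        have : ¬ (arr Sc χ z - 1 < τ) := fun hlt => hlate χ hχS _ hlt h3
        rw [Finset.mem_Icc]
        omega
      calc (S0.filter (fun χ => arr Sc χ z ≤ τ + C/2)).card
          ≤ (Finset.Icc (τ+1) (τ + C/2)).card := by
            apply Finset.card_le_card_of_injOn (fun χ => arr Sc χ z) hinj
            intro χ1 hχ1 χ2 hχ2 heq
            rw [Finset.mem_coe, Finset.mem_filter] at hχ1 hχ2
            obtain ⟨-, hs1, -⟩ := delivery Sc hsolve (hUz χ1 (hsub χ1 hχ1.1)) (hzrt χ1)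
            obtain ⟨-, hs2, -⟩ := delivery Sc hsolve (hUz χ2 (hsub χ2 hχ2.1)) (hzrt χ2)
            rw [hpar χ1 hχ1.1] at hs1
            rw [hpar χ2 hχ2.1] at hs2
            have heq' : arr Sc χ1 z = arr Sc χ2 z := heq
            rw [heq'] at hs1
            exact Option.some.inj (hs1.symm.trans hs2)
          _ = C/2 := by rw [Nat.card_Icc]; omega
    have hEA := harr_side (Sb C D ℓ (2*b) ωA) (port C D ℓ (2*b) ωA) hparA hlA
      (fun χ hχ => Finset.mem_union_left _ hχ)
    have hEB := harr_side (Sb C D ℓ (2*b+1) ωB) (port C D ℓ (2*b+1) ωB) hparB hlB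
      (fun χ hχ => Finset.mem_union_right _ hχ)
    -- the late set
    set Lt := U.filter (fun χ => τ + C/2 + 1 ≤ arr Sc χ z) with hLt
    have hUcard : U.card = 2*C := by
      rw [hU, Finset.card_union_of_disjoint, hcA, hcB]
      · omega
      · rw [Finset.disjoint_left]
        intro χ hA hB
        exact Sb_disj _ _ _ _ _ hA hB
    have hLcard : C ≤ Lt.card := by
      have hcover : U ⊆ Lt ∪ ((Sb C D ℓ (2*b) ωA).filter (fun χ => arr Sc χ z ≤ τ + C/2)
          ∪ (Sb C D ℓ (2*b+1) ωB).filter (fun χ => arr Sc χ z ≤ τ + C/2)) := by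
        intro χ hχ
        rcases Nat.lt_or_ge (τ + C/2) (arr Sc χ z) with h | h
        · exact Finset.mem_union_left _ (Finset.mem_filter.mpr ⟨hχ, by omega⟩)
        · refine Finset.mem_union_right _ ?_
          rw [hU, Finset.mem_union] at hχ
          rcases hχ with hχ | hχ
          · exact Finset.mem_union_left _ (Finset.mem_filter.mpr ⟨hχ, h⟩)
          · exact Finset.mem_union_right _ (Finset.mem_filter.mpr ⟨hχ, h⟩)
      have h1 := Finset.card_le_card hcover
      have h2 := Finset.card_union_le Lt ((Sb C D ℓ (2*b) ωA).filter (fun χ => arr Sc χ z ≤ τ + C/2)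
          ∪ (Sb C D ℓ (2*b+1) ωB).filter (fun χ => arr Sc χ z ≤ τ + C/2))
      have h3 := Finset.card_union_le ((Sb C D ℓ (2*b) ωA).filter (fun χ => arr Sc χ z ≤ τ + C/2))
          ((Sb C D ℓ (2*b+1) ωB).filter (fun χ => arr Sc χ z ≤ τ + C/2))
      omega
    obtain ⟨σ, hσL, hσcard⟩ := Finset.exists_subset_card_eq hLcard
    have hσU : σ ⊆ U := fun χ hχ => Finset.mem_filter.mp (hσL hχ) |>.1
    obtain ⟨ω, hω1, hω2, hω3⟩ := Sb_surj ℓ b ωA ωB σ (hU ▸ hσU) (le_of_eq hσcard)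
    refine ⟨ω, by rw [hω3]; exact hσcard, ?_⟩
    have hport : port C D (ℓ+1) b ω = z := by
      rw [port_succ hℓD hb', hω1, hω2, hzdef]
    intro χ hχ t ht
    rw [hω3] at hχ
    have hχL := hσL hχ
    rw [hLt, Finset.mem_filter] at hχL
    rw [hport]
    apply arr_min Sc hsolve (hUz χ (hσU hχ))
    have : (ℓ+1) * (C/2+1) = τ + C/2 + 1 := by rw [hτ]; ring
    omega

/-- Final lower bound for the constructed instance. -/
lemma lower_bound (hC : 0 < C) : C * D ≤ 2 * T := by
  obtain ⟨ω, hcard, hlate⟩ := invariant Sc hsolve hC D le_rfl 0 (Nat.pow_pos two_pos)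
  have hne : (Sb C D D 0 ω).Nonempty := by
    rw [← Finset.card_pos, hcard]; exact hC
  obtain ⟨χ, hχ⟩ := hne
  have hInT : InT χ (port C D D 0 ω) :=
    InT_port le_rfl (Nat.pow_pos two_pos) hχ
  have hknow : port C D D 0 ω ∈ Sc.knows T χ := hsolve χ _ (supp_mem_iff.mpr hInT)
  have hT : D * (C/2 + 1) ≤ T := by
    by_contra hlt
    exact hlate χ hχ T (by omega) hknow
  have h1 : C ≤ 2 * (C/2 + 1) := by omega
  calc C * D ≤ (2 * (C/2 + 1)) * D := Nat.mul_le_mul_right D h1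
    _ = 2 * (D * (C/2 + 1)) := by ring
    _ ≤ 2 * T := Nat.mul_le_mul_left 2 hT

end LowerBound

end MC
namespace MC

variable {C D : ℕ}

lemma sum_le_of_ratio (a : ℕ → ℕ) : ∀ n, 0 < n → (∀ i, i+1 < n → 2 * a i ≤ a (i+1)) →
    (∑ i ∈ Finset.range n, a i) ≤ 2 * a (n-1) := by
  intro n
  induction n with
  | zero => intro h; exact absurd h (by omega)
  | succ n ih =>
    intro _ hrat
    rw [Finset.sum_range_succ]
    rcases Nat.eq_zero_or_pos n with h0 | hpos
    · subst h0
      have he : (0:ℕ) + 1 - 1 = 0 := rfl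
      rw [he, Finset.sum_range_zero]
      omega
    · have h1 := ih hpos (fun i hi => hrat i (by omega))
      have h2 := hrat (n-1) (by omega)
      have h3 : n - 1 + 1 = n := by omega
      rw [h3] at h2
      have h4 : n + 1 - 1 = n := by omega
      rw [h4]
      omega

lemma cardOut_pos (ℓ : ℕ) : 0 < Fintype.card (Out C ℓ) := Fintype.card_pos

lemma cardOut_succ (ℓ : ℕ) :
    Fintype.card (Out C (ℓ+1)) =
      Fintype.card (Out C ℓ) * Fintype.card (Out C ℓ) * 2^(2*C) := by
  have h : Fintype.card (Out C (ℓ+1)) =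
      Fintype.card (Out C ℓ × Out C ℓ × (Fin (2*C) → Bool)) := rfl
  rw [h, Fintype.card_prod, Fintype.card_prod, Fintype.card_fun]
  simp [Fintype.card_fin, Fintype.card_bool, mul_assoc]

lemma cardOut_le : ∀ ℓ, Fintype.card (Out C ℓ) ≤ 2^(2*C*(2^ℓ - 1)) := by
  intro ℓ
  induction ℓ with
  | zero =>
    have h : Fintype.card (Out C 0) = 1 := rfl
    rw [h]
    exact Nat.one_le_two_pow
  | succ ℓ ih =>
    rw [cardOut_succ]
    calc Fintype.card (Out C ℓ) * Fintype.card (Out C ℓ) * 2^(2*C)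
        ≤ 2^(2*C*(2^ℓ - 1)) * 2^(2*C*(2^ℓ - 1)) * 2^(2*C) :=
          Nat.mul_le_mul (Nat.mul_le_mul ih ih) le_rfl
      _ = 2^(2*C*(2^ℓ - 1) + 2*C*(2^ℓ - 1) + 2*C) := by rw [← pow_add, ← pow_add]
      _ = 2^(2*C*(2^(ℓ+1) - 1)) := by
          congr 1
          have h1 : 1 ≤ 2^ℓ := Nat.one_le_two_pow
          have h2 : 2^(ℓ+1) = 2 * 2^ℓ := by rw [pow_succ]; ring
          have h3 : 2*C*(2^ℓ - 1) = 2*C*2^ℓ - 2*C := by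
            rw [Nat.mul_sub, mul_one]
          have h4 : 2*C*(2^(ℓ+1) - 1) = 2*C*2^(ℓ+1) - 2*C := by
            rw [Nat.mul_sub, mul_one]
          have h5 : 2*C*2^(ℓ+1) = 2*(2*C*2^ℓ) := by rw [h2]; ring
          have h6 : 2*C ≤ 2*C*2^ℓ := Nat.le_mul_of_pos_right _ (Nat.pow_pos two_pos)
          omega

lemma card_Vz : Fintype.card (Vz C D) =
    ∑ ℓ ∈ Finset.range D,
      2^(D-1-ℓ) * (Fintype.card (Out C ℓ) * Fintype.card (Out C ℓ)) := by
  have h : Fintype.card (Vz C D) =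
      ∑ ℓ : Fin D, Fintype.card (Fin (2^(D-1-ℓ.val)) × Out C ℓ.val × Out C ℓ.val) := by
    exact Fintype.card_sigma
  rw [h, Fin.sum_univ_eq_sum_range (fun ℓ => Fintype.card (Fin (2^(D-1-ℓ)) × Out C ℓ × Out C ℓ))]
  congr 1
  funext ℓ
  rw [Fintype.card_prod, Fintype.card_prod, Fintype.card_fin]

lemma card_Vert_le (hC : 0 < C) (hD : 0 < D) :
    Fintype.card (Vert C D) ≤ 2^(C * 2^(D+1)) := by
  have hcv : Fintype.card (Vert C D) = 2^D + Fintype.card (Vz C D) := by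
    have h : Fintype.card (Vert C D) = Fintype.card (Fin (2^D) ⊕ Vz C D) := rfl
    rw [h, Fintype.card_sum, Fintype.card_fin]
  set a : ℕ → ℕ := fun ℓ => 2^(D-1-ℓ) * (Fintype.card (Out C ℓ) * Fintype.card (Out C ℓ))
    with hadef
  have hrat : ∀ i, i+1 < D → 2 * a i ≤ a (i+1) := by
    intro i hi
    rw [hadef]
    simp only
    rw [cardOut_succ]
    have hO1 : 1 ≤ Fintype.card (Out C i) := cardOut_pos i
    have hC4 : 4 ≤ 2^(2*C) := by
      calc (4:ℕ) = 2^2 := rfl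
        _ ≤ 2^(2*C) := Nat.pow_le_pow_right (by norm_num : (1:ℕ) ≤ 2) (by omega)
    set O := Fintype.card (Out C i)
    have hexp : 2^(D-1-i) = 2 * 2^(D-1-(i+1)) := by
      rw [← pow_succ']
      congr 1
      omega
    calc 2 * (2^(D-1-i) * (O * O)) = 4 * 2^(D-1-(i+1)) * (O * O) := by rw [hexp]; ring
      _ ≤ (2^(2*C) * 2^(D-1-(i+1))) * ((O*O*1) * (O*O*2^(2*C))) := by
          have h1 : 4 * 2^(D-1-(i+1)) ≤ 2^(2*C) * 2^(D-1-(i+1)) :=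
            Nat.mul_le_mul_right _ hC4
          have h2 : O * O ≤ (O*O*1) * (O*O*2^(2*C)) := by
            rw [mul_one]
            exact Nat.le_mul_of_pos_right _ (by positivity)
          exact Nat.mul_le_mul h1 h2
      _ = 2^(D-1-(i+1)) * (O * O * 2^(2*C) * (O * O * 2^(2*C))) := by ring
  have hsum := sum_le_of_ratio a D hD hrat
  rw [hcv, card_Vz]
  have haD : a (D-1) ≤ 2^(2*C*2^D - 4*C) := by
    rw [hadef]
    simp only
    have h1 : D-1-(D-1) = 0 := by omega
    rw [h1, pow_zero, one_mul]
    calc Fintype.card (Out C (D-1)) * Fintype.card (Out C (D-1))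
        ≤ 2^(2*C*(2^(D-1) - 1)) * 2^(2*C*(2^(D-1) - 1)) :=
          Nat.mul_le_mul (cardOut_le _) (cardOut_le _)
      _ = 2^(2*C*(2^(D-1) - 1) + 2*C*(2^(D-1) - 1)) := by rw [← pow_add]
      _ = 2^(2*C*2^D - 4*C) := by
          congr 1
          have h2 : 2^D = 2 * 2^(D-1) := by
            rw [← pow_succ']
            congr 1
            omega
          have h3 : 2*C*(2^(D-1) - 1) = 2*C*2^(D-1) - 2*C := by rw [Nat.mul_sub, mul_one]
          have h4 : 2*C*2^D = 2*(2*C*2^(D-1)) := by rw [h2]; ring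
          have h5 : 2*C ≤ 2*C*2^(D-1) := Nat.le_mul_of_pos_right _ (Nat.pow_pos two_pos)
          omega
  have hK : C * 2^(D+1) = 2*C*2^D := by
    rw [pow_succ]
    ring
  rw [hK]
  have hkD : 2*C*2^D ≥ 2*2^D := by
    have : 2*C ≥ 2 := by omega
    exact Nat.mul_le_mul_right _ this
  have hDlt : D < 2^D := Nat.lt_two_pow_self
  have h2D : 2^D ≤ 2^(2*C*2^D - 1) := Nat.pow_le_pow_right (by norm_num : (1:ℕ) ≤ 2) (by omega)
  have hsum2 : (∑ i ∈ Finset.range D, a i) ≤ 2 * 2^(2*C*2^D - 4*C) := by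
    calc (∑ i ∈ Finset.range D, a i) ≤ 2 * a (D-1) := hsum
      _ ≤ 2 * 2^(2*C*2^D - 4*C) := Nat.mul_le_mul_left _ haD
  have hlast : 2 * 2^(2*C*2^D - 4*C) ≤ 2^(2*C*2^D - 1) := by
    rw [← pow_succ']
    apply Nat.pow_le_pow_right (by norm_num : (1:ℕ) ≤ 2)
    omega
  calc 2^D + (∑ i ∈ Finset.range D, a i)
      ≤ 2^(2*C*2^D - 1) + 2^(2*C*2^D - 1) := Nat.add_le_add h2D (le_trans hsum2 hlast)
    _ = 2 * 2^(2*C*2^D - 1) := by ring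
    _ = 2^(2*C*2^D - 1 + 1) := by rw [pow_succ]; ring
    _ = 2^(2*C*2^D) := by congr 1; omega

end MC
section PSInduce

open SimpleGraph

variable {α : Type*} {G : SimpleGraph α} {r : α} {N : Set α} {par : α → α} {dep : α → ℕ}

lemma ps_induce_isTree (hps : PS G r N par dep) : (G.induce N).IsTree := by
  obtain ⟨hadj, hr, hparr, hdep0, hpar⟩ := id hps
  have hparN : ∀ v : α, v ∈ N → par v ∈ N := by
    intro v hv
    by_cases h : v = r
    · rw [h, hparr]; exact hr
    · exact (hpar v hv h).1
  have hps' : PS (G.induce N) (⟨r, hr⟩ : N) Set.univ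
      (fun v => ⟨par v.val, hparN v.val v.2⟩) (fun v => dep v.val) := by
    refine ⟨?_, Set.mem_univ _, Subtype.ext hparr, hdep0, ?_⟩
    · intro u v
      rw [SimpleGraph.comap_adj]
      rw [hadj]
      constructor
      · rintro ⟨hne, ⟨h1, h2⟩ | ⟨h1, h2⟩⟩
        · exact ⟨fun h => hne (congrArg Subtype.val h),
            Or.inl ⟨Subtype.ext h1, Set.mem_univ _⟩⟩
        · exact ⟨fun h => hne (congrArg Subtype.val h),
            Or.inr ⟨Subtype.ext h1, Set.mem_univ _⟩⟩
      · rintro ⟨hne, ⟨h1, -⟩ | ⟨h1, -⟩⟩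
        · exact ⟨fun h => hne (Subtype.ext h), Or.inl ⟨congrArg Subtype.val h1, v.2⟩⟩
        · exact ⟨fun h => hne (Subtype.ext h), Or.inr ⟨congrArg Subtype.val h1, u.2⟩⟩
    · intro v _ hvr
      have hval : v.val ≠ r := fun h => hvr (Subtype.ext h)
      exact ⟨Set.mem_univ _, (hpar v.val v.2 hval).2⟩
  exact ⟨ps_connected hps' (fun _ => Set.mem_univ _), ps_acyclic hps'⟩

end PSInduce

namespace MC

open SimpleGraph

variable {C D n : ℕ}

section Transport

variable (f : Vert C D ↪ Fin n)

open Classical in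
noncomputable def labF (x y : Fin n) : Finset (Lab C D) :=
  if hx : ∃ a, f a = x then if hy : ∃ b, f b = y then lab C D hx.choose hy.choose
    else ∅ else ∅

noncomputable def rtF (χ : Lab C D) : Fin n := f (rt C D χ)

lemma labF_apply (a b : Vert C D) : labF f (f a) (f b) = lab C D a b := by
  classical
  have hx : ∃ u, f u = f a := ⟨a, rfl⟩
  have hy : ∃ u, f u = f b := ⟨b, rfl⟩
  rw [labF, dif_pos hx, dif_pos hy,
    f.injective hx.choose_spec, f.injective hy.choose_spec]

lemma mem_labF {x y : Fin n} {χ : Lab C D} :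
    χ ∈ labF f x y ↔ ∃ a b, f a = x ∧ f b = y ∧ χ ∈ lab C D a b := by
  classical
  constructor
  · intro h
    by_cases hx : ∃ a, f a = x
    · by_cases hy : ∃ b, f b = y
      · rw [labF, dif_pos hx, dif_pos hy] at h
        exact ⟨hx.choose, hy.choose, hx.choose_spec, hy.choose_spec, h⟩
      · rw [labF, dif_pos hx, dif_neg hy] at h
        exact absurd h (Finset.notMem_empty χ)
    · rw [labF, dif_neg hx] at h
      exact absurd h (Finset.notMem_empty χ)
  · rintro ⟨a, b, rfl, rfl, h⟩
    rwa [labF_apply]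

lemma labF_symm (x y : Fin n) : labF f x y = labF f y x := by
  classical
  rw [labF, labF]
  by_cases hx : ∃ a, f a = x <;> by_cases hy : ∃ b, f b = y
  · rw [dif_pos hx, dif_pos hy, dif_pos hy, dif_pos hx, lab_symm]
  · rw [dif_pos hx, dif_neg hy, dif_neg hy]
  · rw [dif_neg hx, dif_pos hy, dif_neg hx]
  · rw [dif_neg hx, dif_neg hy]

lemma labF_card_le (x y : Fin n) : (labF f x y).card ≤ C := by
  classical
  rw [labF]
  by_cases hx : ∃ a, f a = x
  · by_cases hy : ∃ b, f b = y
    · rw [dif_pos hx, dif_pos hy]; exact lab_card_le _ _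
    · rw [dif_pos hx, dif_neg hy]; simp
  · rw [dif_neg hx]; simp

lemma adjF_iff {χ : Lab C D} {x y : Fin n} :
    (labelGraph (labF f) χ).Adj x y ↔
    ∃ a b, f a = x ∧ f b = y ∧ (labelGraph (lab C D) χ).Adj a b := by
  constructor
  · rintro ⟨hne, h | h⟩
    · rw [mem_labF] at h
      obtain ⟨a, b, rfl, rfl, h⟩ := h
      exact ⟨a, b, rfl, rfl, fun hab => hne (congrArg f hab), Or.inl h⟩
    · rw [mem_labF] at h
      obtain ⟨c, d, hc, hd, h⟩ := h
      subst hc; subst hd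
      exact ⟨d, c, rfl, rfl, fun hab => hne (congrArg f hab), Or.inr h⟩
  · rintro ⟨a, b, rfl, rfl, ⟨hne, h | h⟩⟩
    · exact ⟨fun hab => hne (f.injective hab), Or.inl (by rwa [labF_apply])⟩
    · exact ⟨fun hab => hne (f.injective hab), Or.inr (by rwa [labF_apply])⟩

noncomputable def parF (χ : Lab C D) (x : Fin n) : Fin n :=
  if h : ∃ a, f a = x then f (parv χ h.choose) else x

noncomputable def depF (x : Fin n) : ℕ :=
  if h : ∃ a : Vert C D, f a = x then depv h.choose else 0

lemma parF_apply (χ : Lab C D) (a : Vert C D) : parF f χ (f a) = f (parv χ a) := by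
  have hx : ∃ u, f u = f a := ⟨a, rfl⟩
  rw [parF, dif_pos hx, f.injective hx.choose_spec]

lemma depF_apply (a : Vert C D) : depF f (f a) = depv a := by
  have hx : ∃ u, f u = f a := ⟨a, rfl⟩
  rw [depF, dif_pos hx, f.injective hx.choose_spec]

lemma depF_le (x : Fin n) : depF f x ≤ D := by
  rw [depF]
  by_cases h : ∃ a : Vert C D, f a = x
  · rw [dif_pos h]; exact depv_le_D _
  · rw [dif_neg h]; omega

/-- Parent system for the transported instance. -/
lemma ps_F (χ : Lab C D) :
    PS (labelGraph (labF f) χ) (rtF f χ) {x | ∃ a, f a = x ∧ InT χ a}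
      (parF f χ) (depF f) := by
  have hmain := ps_main (C := C) (D := D) χ
  refine ⟨?_, ⟨rt C D χ, rfl, rt_InT χ⟩, ?_, ?_, ?_⟩
  · intro x y
    constructor
    · intro h
      rw [adjF_iff] at h
      obtain ⟨a, b, rfl, rfl, hab⟩ := h
      rw [hmain.1] at hab
      obtain ⟨hne, ⟨h1, h2⟩ | ⟨h1, h2⟩⟩ := hab
      · exact ⟨fun h => hne (f.injective h),
          Or.inl ⟨by rw [parF_apply, h1], ⟨b, rfl, h2⟩⟩⟩
      · exact ⟨fun h => hne (f.injective h),
          Or.inr ⟨by rw [parF_apply, h1], ⟨a, rfl, h2⟩⟩⟩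
    · rintro ⟨hne, ⟨h1, hy⟩ | ⟨h1, hy⟩⟩
      · obtain ⟨b, rfl, hb⟩ := hy
        rw [parF_apply] at h1
        rw [adjF_iff]
        refine ⟨parv χ b, b, h1.symm, rfl, ?_⟩
        rw [hmain.1]
        exact ⟨fun h => hne (by rw [h1, h]), Or.inl ⟨rfl, hb⟩⟩
      · obtain ⟨a, rfl, ha⟩ := hy
        rw [parF_apply] at h1
        rw [adjF_iff]
        refine ⟨a, parv χ a, rfl, h1.symm, ?_⟩
        rw [hmain.1]
        exact ⟨fun h => hne (by rw [h1, ← h]), Or.inr ⟨rfl, ha⟩⟩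
  · rw [rtF, parF_apply, parv_rt]
  · rw [rtF, depF_apply, depv_rt]
  · rintro x ⟨a, rfl, ha⟩ hxr
    have har : a ≠ rt C D χ := fun h => hxr (by rw [rtF, h])
    obtain ⟨hp1, hp2⟩ := parv_step ha har
    rw [parF_apply, depF_apply, depF_apply]
    exact ⟨⟨parv χ a, rfl, hp1⟩, hp2⟩

lemma suppF_eq (χ : Lab C D) :
    labelSupp (labF f) (rtF f) χ = {x | ∃ a, f a = x ∧ InT χ a} := by
  ext x
  constructor
  · rintro (rfl | ⟨u, hadj⟩)
    · exact ⟨rt C D χ, rfl, rt_InT χ⟩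
    · exact (ps_adj_mem (ps_F f χ) hadj).1
  · intro hx
    by_cases hxr : x = rtF f χ
    · exact Or.inl hxr
    · exact Or.inr ⟨parF f χ x, (ps_parent_adj (ps_F f χ) hx hxr).symm⟩

end Transport

end MC
/-- For any positive integers `C`, `D`, `n` with
`C·2^(D+1) ≤ log₂ n`, there exists a simultaneous multicast instance on an `n`-node
graph — finitely many rooted trees given by edge label sets `lab`, each label
inducing a tree containing its root, with congestion exactly `C` and dilation
exactly `D` — such that every store-and-forward schedule delivering all packets
within `T` rounds satisfies `C·D ≤ 2·T`, i.e. has length at least `C·D/2`. -/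
theorem multicast_lower_bound_exists (C D n : ℕ) (hC : 0 < C) (hD : 0 < D)
    (hn : 0 < n) (hlog : C * 2 ^ (D + 1) ≤ Nat.log 2 n) :
    ∃ (V : Type) (inst : Fintype V) (L : Type) (lab : V → V → Finset L)
      (root : L → V),
      @Fintype.card V inst = n ∧
      (∀ u v, lab u v = lab v u) ∧
      (∀ u v, (lab u v).card ≤ C) ∧ (∃ u v, (lab u v).card = C) ∧
      (∀ χ, root χ ∈ labelSupp lab root χ ∧
        ((labelGraph lab χ).induce (labelSupp lab root χ)).IsTree) ∧
      (∀ (χ : L) (v : V) (p : (labelGraph lab χ).Walk (root χ) v),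
          p.IsPath → p.length ≤ D) ∧
      (∃ (χ : L) (v : V) (p : (labelGraph lab χ).Walk (root χ) v),
          p.IsPath ∧ p.length = D) ∧
      ∀ (Sc : Schedule V L lab root) (T : ℕ), Sc.Solves T → C * D ≤ 2 * T := by
  classical
  have hcard : Fintype.card (MC.Vert C D) ≤ n := by
    calc Fintype.card (MC.Vert C D) ≤ 2^(C * 2^(D+1)) := MC.card_Vert_le hC hD
      _ ≤ 2^(Nat.log 2 n) := Nat.pow_le_pow_right (by norm_num) hlog
      _ ≤ n := Nat.pow_log_le_self 2 (by omega)
  obtain ⟨f⟩ : Nonempty (MC.Vert C D ↪ Fin n) := by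
    apply Function.Embedding.nonempty_of_card_le
    simpa using hcard
  refine ⟨Fin n, inferInstance, MC.Lab C D, MC.labF f, MC.rtF f,
    by simp, MC.labF_symm f, MC.labF_card_le f, ?_, ?_, ?_, ?_, ?_⟩
  · obtain ⟨u, v, huv⟩ := MC.lab_witness (C := C) hD
    exact ⟨f u, f v, by rw [MC.labF_apply]; exact huv⟩
  · intro χ
    refine ⟨Or.inl rfl, ?_⟩
    rw [MC.suppF_eq]
    exact ps_induce_isTree (MC.ps_F f χ)
  · intro χ v p hp
    have h := ps_path_length (MC.ps_F f χ) p.reverse.length v p.reverse le_rfl hp.reverse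
    rw [SimpleGraph.Walk.length_reverse] at h
    rw [h]
    exact MC.depF_le f v
  · obtain ⟨χ, v, p, hp, hlen⟩ := MC.dilation_witness (D := D) hC
    refine ⟨χ, f v,
      p.map ⟨f, fun hab => (MC.adjF_iff f).mpr ⟨_, _, rfl, rfl, hab⟩⟩, ?_, ?_⟩
    · exact SimpleGraph.Walk.map_isPath_of_injective f.injective hp
    · refine (SimpleGraph.Walk.length_map _ _).trans ?_
      exact hlen
  · intro Sc T hsolve
    let Sc' : Schedule (MC.Vert C D) (MC.Lab C D) (MC.lab C D) (MC.rt C D) :=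
      { knows := fun t χ => {a | f a ∈ Sc.knows t χ}
        send := fun t a b => Sc.send t (f a) (f b)
        init := by
          intro χ
          ext a
          simp only [Set.mem_setOf_eq, Set.mem_singleton_iff]
          rw [Sc.init]
          simp only [Set.mem_singleton_iff]
          exact ⟨fun h => f.injective h, fun h => by rw [h]; rfl⟩
        send_mem := by
          intro t u v χ h
          have h2 := Sc.send_mem t (f u) (f v) χ h
          rwa [MC.labF_apply] at h2
        one_per_edge := fun t u v h => Sc.one_per_edge t (f u) (f v) h
        step := by
          intro t χ
          ext a
          simp only [Set.mem_setOf_eq]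
          rw [Sc.step]
          simp only [Set.mem_union, Set.mem_setOf_eq]
          constructor
          · rintro (h | ⟨u, hu⟩)
            · exact Or.inl h
            · have hlab := (Sc.send_mem t u (f a) χ hu).1
              rw [MC.mem_labF] at hlab
              obtain ⟨c, d, hc, hd, -⟩ := hlab
              exact Or.inr ⟨c, by rw [hc]; exact hu⟩
          · rintro (h | ⟨b, hb⟩)
            · exact Or.inl h
            · exact Or.inr ⟨f b, hb⟩ }
    have hsolve' : Sc'.Solves T := by
      intro χ v hv
      show f v ∈ Sc.knows T χ
      apply hsolve χ (f v)
      rw [MC.suppF_eq]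
      exact ⟨v, rfl, MC.supp_mem_iff.mp hv⟩
    exact MC.lower_bound Sc' hsolve' hC
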